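/- Let ε > 0, μ > 0, δ(x₁) = ε + x₁², k(x) = x₂/δ(x₁), and p̄₁³(x) = 2μx₁/δ(x₁)² + (12μx₁/δ(x₁))(1 − 2x₁²/δ(x₁)) k(x)². With (v₁³)^{(1)} the first component of the auxiliary field v₁³ as constructed, one has μ ∂_{x₂x₂}(v₁³)^{(1)} − ∂_{x₁}p̄₁³ = μ( 9/(2δ) − 72x₂²/δ³ + 144x₁²x₂²/δ⁴ − 192x₁⁴x₂²/δ⁵ ), and hence |μ ∂_{x₂x₂}(v₁³)^{(1)} − ∂_{x₁}p̄₁³| ≤ C/δ(x₁) on the neck region {|x₂| < δ(x₁)/2}, with C depending only on μ. -/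

import Mathlib

set_option maxHeartbeats 2000000 in
/-- Identity and bound for `μ ∂_{x₂x₂}(v₁³)⁽¹⁾ - ∂_{x₁} p̄₁³` on the neck region. -/
theorem stmt16 (μ : ℝ) (hμ : 0 < μ) :
    ∃ C > (0:ℝ), ∀ ε : ℝ, 0 < ε → ∀ x₁ x₂ : ℝ,
      |x₂| < (ε + x₁ ^ 2) / 2 →
      (μ * deriv (deriv (fun t =>
            t * (t / (ε + x₁ ^ 2) + 1 / 2)
              + (1 - 4 * x₁ ^ 2 / (ε + x₁ ^ 2) - 5 * t * (t / (ε + x₁ ^ 2)))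
                * ((t / (ε + x₁ ^ 2)) ^ 2 - 1 / 4))) x₂
          - deriv (fun t =>
              2 * μ * t / (ε + t ^ 2) ^ 2
                + (12 * μ * t / (ε + t ^ 2)) * (1 - 2 * t ^ 2 / (ε + t ^ 2))
                  * (x₂ / (ε + t ^ 2)) ^ 2) x₁
        = μ * (9 / (2 * (ε + x₁ ^ 2)) - 72 * x₂ ^ 2 / (ε + x₁ ^ 2) ^ 3
            + 144 * x₁ ^ 2 * x₂ ^ 2 / (ε + x₁ ^ 2) ^ 4
            - 192 * x₁ ^ 4 * x₂ ^ 2 / (ε + x₁ ^ 2) ^ 5)) ∧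
      |μ * deriv (deriv (fun t =>
            t * (t / (ε + x₁ ^ 2) + 1 / 2)
              + (1 - 4 * x₁ ^ 2 / (ε + x₁ ^ 2) - 5 * t * (t / (ε + x₁ ^ 2)))
                * ((t / (ε + x₁ ^ 2)) ^ 2 - 1 / 4))) x₂
          - deriv (fun t =>
              2 * μ * t / (ε + t ^ 2) ^ 2
                + (12 * μ * t / (ε + t ^ 2)) * (1 - 2 * t ^ 2 / (ε + t ^ 2))
                  * (x₂ / (ε + t ^ 2)) ^ 2) x₁|
        ≤ C / (ε + x₁ ^ 2) := by
  refine ⟨107 * μ, by positivity, ?_⟩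
  intro ε hε x₁ x₂ hx₂
  have hd : (0:ℝ) < ε + x₁ ^ 2 := by positivity
  have hd' : (ε + x₁ ^ 2) ≠ 0 := hd.ne'
  -- first derivative of the inner function
  have hf1 : deriv (fun t =>
            t * (t / (ε + x₁ ^ 2) + 1 / 2)
              + (1 - 4 * x₁ ^ 2 / (ε + x₁ ^ 2) - 5 * t * (t / (ε + x₁ ^ 2)))
                * ((t / (ε + x₁ ^ 2)) ^ 2 - 1 / 4))
      = fun t : ℝ => (-20 / (ε + x₁ ^ 2) ^ 3) * t ^ 3
          + (2 / (ε + x₁ ^ 2) + 2 * (1 - 4 * x₁ ^ 2 / (ε + x₁ ^ 2)) / (ε + x₁ ^ 2) ^ 2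
              + 5 / (2 * (ε + x₁ ^ 2))) * t + 1 / 2 := by
    funext t
    have h1 : HasDerivAt (fun y : ℝ => y * (y / (ε + x₁ ^ 2) + 1 / 2))
        (1 * (t / (ε + x₁ ^ 2) + 1 / 2) + t * (1 / (ε + x₁ ^ 2))) t :=
      (hasDerivAt_id t).mul (((hasDerivAt_id t).div_const (ε + x₁ ^ 2)).add_const (1 / 2))
    have h2 : HasDerivAt
        (fun y : ℝ => 1 - 4 * x₁ ^ 2 / (ε + x₁ ^ 2) - 5 * y * (y / (ε + x₁ ^ 2)))
        (-(5 * 1 * (t / (ε + x₁ ^ 2)) + 5 * t * (1 / (ε + x₁ ^ 2)))) t :=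
      (((hasDerivAt_id t).const_mul 5).mul
        ((hasDerivAt_id t).div_const (ε + x₁ ^ 2))).const_sub (1 - 4 * x₁ ^ 2 / (ε + x₁ ^ 2))
    have h3 : HasDerivAt (fun y : ℝ => (y / (ε + x₁ ^ 2)) ^ 2 - 1 / 4)
        ((↑2 * (t / (ε + x₁ ^ 2)) ^ 1) * (1 / (ε + x₁ ^ 2))) t := by
      have := (((hasDerivAt_id t).div_const (ε + x₁ ^ 2)).pow 2).sub_const (1 / 4)
      simpa using this
    have H := h1.add (h2.mul h3)
    refine H.deriv.trans ?_
    field_simp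
    ring
  rw [hf1]
  -- second derivative
  have hf2 : deriv (fun t : ℝ => (-20 / (ε + x₁ ^ 2) ^ 3) * t ^ 3
          + (2 / (ε + x₁ ^ 2) + 2 * (1 - 4 * x₁ ^ 2 / (ε + x₁ ^ 2)) / (ε + x₁ ^ 2) ^ 2
              + 5 / (2 * (ε + x₁ ^ 2))) * t + 1 / 2) x₂
      = (-60 / (ε + x₁ ^ 2) ^ 3) * x₂ ^ 2
          + (2 / (ε + x₁ ^ 2) + 2 * (1 - 4 * x₁ ^ 2 / (ε + x₁ ^ 2)) / (ε + x₁ ^ 2) ^ 2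
              + 5 / (2 * (ε + x₁ ^ 2))) := by
    have H := ((((hasDerivAt_pow 3 x₂).const_mul ((-20 : ℝ) / (ε + x₁ ^ 2) ^ 3)).add
        ((hasDerivAt_id x₂).const_mul
          (2 / (ε + x₁ ^ 2) + 2 * (1 - 4 * x₁ ^ 2 / (ε + x₁ ^ 2)) / (ε + x₁ ^ 2) ^ 2
              + 5 / (2 * (ε + x₁ ^ 2))))).add_const (1 / 2))
    refine H.deriv.trans ?_
    push_cast
    ring
  rw [hf2]
  -- derivative of the pressure term
  have hG : deriv (fun t =>
              2 * μ * t / (ε + t ^ 2) ^ 2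
                + (12 * μ * t / (ε + t ^ 2)) * (1 - 2 * t ^ 2 / (ε + t ^ 2))
                  * (x₂ / (ε + t ^ 2)) ^ 2) x₁
      = 2 * μ / (ε + x₁ ^ 2) ^ 2 - 8 * μ * x₁ ^ 2 / (ε + x₁ ^ 2) ^ 3
          + 12 * μ * x₂ ^ 2 * ((ε - 3 * x₁ ^ 2) / (ε + x₁ ^ 2) ^ 4
            - 8 * x₁ ^ 2 * (ε - x₁ ^ 2) / (ε + x₁ ^ 2) ^ 5) := by
    have hp : HasDerivAt (fun t : ℝ => ε + t ^ 2) (2 * x₁) x₁ := by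
      simpa using (hasDerivAt_pow 2 x₁).const_add ε
    have hA : HasDerivAt (fun t : ℝ => 2 * μ * t / (ε + t ^ 2) ^ 2)
        ((2 * μ * 1 * (ε + x₁ ^ 2) ^ 2 - 2 * μ * x₁ * (↑2 * (ε + x₁ ^ 2) ^ 1 * (2 * x₁)))
          / ((ε + x₁ ^ 2) ^ 2) ^ 2) x₁ :=
      ((hasDerivAt_id x₁).const_mul (2 * μ)).div (hp.pow 2) (pow_ne_zero 2 hd')
    have hB : HasDerivAt (fun t : ℝ => 12 * μ * t / (ε + t ^ 2))
        ((12 * μ * 1 * (ε + x₁ ^ 2) - 12 * μ * x₁ * (2 * x₁)) / (ε + x₁ ^ 2) ^ 2) x₁ :=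
      ((hasDerivAt_id x₁).const_mul (12 * μ)).div hp hd'
    have hC : HasDerivAt (fun t : ℝ => 1 - 2 * t ^ 2 / (ε + t ^ 2))
        (-((2 * (↑2 * x₁ ^ 1) * (ε + x₁ ^ 2) - 2 * x₁ ^ 2 * (2 * x₁)) / (ε + x₁ ^ 2) ^ 2)) x₁ :=
      (((hasDerivAt_pow 2 x₁).const_mul 2).div hp hd').const_sub 1
    have hD : HasDerivAt (fun t : ℝ => (x₂ / (ε + t ^ 2)) ^ 2)
        ((↑2 * (x₂ / (ε + x₁ ^ 2)) ^ 1) *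
          ((0 * (ε + x₁ ^ 2) - x₂ * (2 * x₁)) / (ε + x₁ ^ 2) ^ 2)) x₁ :=
      ((hasDerivAt_const x₁ x₂).div hp hd').pow 2
    have H := hA.add ((hB.mul hC).mul hD)
    refine H.deriv.trans ?_
    simp only [Pi.mul_apply]
    field_simp
    ring
  rw [hG]
  -- the identity
  have key : μ * ((-60 / (ε + x₁ ^ 2) ^ 3) * x₂ ^ 2
          + (2 / (ε + x₁ ^ 2) + 2 * (1 - 4 * x₁ ^ 2 / (ε + x₁ ^ 2)) / (ε + x₁ ^ 2) ^ 2
              + 5 / (2 * (ε + x₁ ^ 2))))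
      - (2 * μ / (ε + x₁ ^ 2) ^ 2 - 8 * μ * x₁ ^ 2 / (ε + x₁ ^ 2) ^ 3
          + 12 * μ * x₂ ^ 2 * ((ε - 3 * x₁ ^ 2) / (ε + x₁ ^ 2) ^ 4
            - 8 * x₁ ^ 2 * (ε - x₁ ^ 2) / (ε + x₁ ^ 2) ^ 5))
      = μ * (9 / (2 * (ε + x₁ ^ 2)) - 72 * x₂ ^ 2 / (ε + x₁ ^ 2) ^ 3
            + 144 * x₁ ^ 2 * x₂ ^ 2 / (ε + x₁ ^ 2) ^ 4
            - 192 * x₁ ^ 4 * x₂ ^ 2 / (ε + x₁ ^ 2) ^ 5) := by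
    field_simp
    ring
  refine ⟨key, ?_⟩
  rw [key]
  -- the bound
  have hx2sq : x₂ ^ 2 ≤ (ε + x₁ ^ 2) ^ 2 / 4 := by
    have h1 : |x₂| ^ 2 < ((ε + x₁ ^ 2) / 2) ^ 2 := by
      apply pow_lt_pow_left₀ hx₂ (abs_nonneg x₂)
      norm_num
    rw [sq_abs] at h1
    nlinarith
  have hx1 : x₁ ^ 2 ≤ ε + x₁ ^ 2 := by nlinarith
  have hx14 : x₁ ^ 4 ≤ (ε + x₁ ^ 2) ^ 2 := by nlinarith [sq_nonneg x₁]
  have hN : |(9:ℝ)/2 * (ε + x₁ ^ 2) ^ 4 - 72 * x₂ ^ 2 * (ε + x₁ ^ 2) ^ 2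
      + 144 * x₁ ^ 2 * x₂ ^ 2 * (ε + x₁ ^ 2)
      - 192 * x₁ ^ 4 * x₂ ^ 2| ≤ 107 * (ε + x₁ ^ 2) ^ 4 := by
    rw [abs_le]
    constructor
    · nlinarith [mul_nonneg (sq_nonneg x₁) (sq_nonneg x₂), sq_nonneg x₂,
        sq_nonneg (ε + x₁ ^ 2),
        mul_le_mul_of_nonneg_left hx2sq
          (mul_nonneg (by norm_num : (0:ℝ) ≤ 192) (sq_nonneg x₁)),
        mul_le_mul_of_nonneg_right hx14
          (mul_nonneg (by norm_num : (0:ℝ) ≤ 192) (sq_nonneg x₂)),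
        mul_le_mul_of_nonneg_left hx2sq
          (mul_nonneg (by norm_num : (0:ℝ) ≤ 72) (sq_nonneg (ε + x₁ ^ 2))),
        hd.le]
    · nlinarith [mul_nonneg (mul_nonneg (sq_nonneg x₁) (sq_nonneg x₂)) hd.le, sq_nonneg x₂,
        mul_le_mul_of_nonneg_left (mul_le_mul hx1 hx2sq (sq_nonneg x₂) hd.le)
          (mul_nonneg (by norm_num : (0:ℝ) ≤ 144) hd.le),
        mul_nonneg (mul_nonneg (sq_nonneg (x₁ ^ 2)) (sq_nonneg x₂)) hd.le, hd.le]
  have hR : |9 / (2 * (ε + x₁ ^ 2)) - 72 * x₂ ^ 2 / (ε + x₁ ^ 2) ^ 3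
      + 144 * x₁ ^ 2 * x₂ ^ 2 / (ε + x₁ ^ 2) ^ 4
      - 192 * x₁ ^ 4 * x₂ ^ 2 / (ε + x₁ ^ 2) ^ 5| ≤ 107 / (ε + x₁ ^ 2) := by
    have hrw : 9 / (2 * (ε + x₁ ^ 2)) - 72 * x₂ ^ 2 / (ε + x₁ ^ 2) ^ 3
        + 144 * x₁ ^ 2 * x₂ ^ 2 / (ε + x₁ ^ 2) ^ 4
        - 192 * x₁ ^ 4 * x₂ ^ 2 / (ε + x₁ ^ 2) ^ 5
        = ((9:ℝ)/2 * (ε + x₁ ^ 2) ^ 4 - 72 * x₂ ^ 2 * (ε + x₁ ^ 2) ^ 2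
            + 144 * x₁ ^ 2 * x₂ ^ 2 * (ε + x₁ ^ 2)
            - 192 * x₁ ^ 4 * x₂ ^ 2) / (ε + x₁ ^ 2) ^ 5 := by
      field_simp
    have h5 : (0:ℝ) < (ε + x₁ ^ 2) ^ 5 := by positivity
    rw [hrw, abs_div, abs_of_pos h5, div_le_div_iff₀ h5 hd]
    calc |(9:ℝ)/2 * (ε + x₁ ^ 2) ^ 4 - 72 * x₂ ^ 2 * (ε + x₁ ^ 2) ^ 2
          + 144 * x₁ ^ 2 * x₂ ^ 2 * (ε + x₁ ^ 2)
          - 192 * x₁ ^ 4 * x₂ ^ 2| * (ε + x₁ ^ 2)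
        ≤ (107 * (ε + x₁ ^ 2) ^ 4) * (ε + x₁ ^ 2) :=
          mul_le_mul_of_nonneg_right hN hd.le
      _ = 107 * (ε + x₁ ^ 2) ^ 5 := by ring
  rw [abs_mul, abs_of_pos hμ]
  calc μ * |9 / (2 * (ε + x₁ ^ 2)) - 72 * x₂ ^ 2 / (ε + x₁ ^ 2) ^ 3
        + 144 * x₁ ^ 2 * x₂ ^ 2 / (ε + x₁ ^ 2) ^ 4
        - 192 * x₁ ^ 4 * x₂ ^ 2 / (ε + x₁ ^ 2) ^ 5|
      ≤ μ * (107 / (ε + x₁ ^ 2)) := mul_le_mul_of_nonneg_left hR hμ.le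
    _ = 107 * μ / (ε + x₁ ^ 2) := by ring
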